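/- With the stationary distribution σ of the threshold-n Markov chain (σ_0 = 1/(1 + (1−α)(1−β^n)/(1−β) + (1−α)aβ^{n−1}/(1−a)), σ_k = (1−α)β^{k−1}σ_0 for 1 ≤ k ≤ n, σ_k = (1−α)β^{n−1}a^{k−n}σ_0 for k ≥ n+1), the total mass on states ≥ n satisfies ∑_{k=n}^∞ σ_k = (1−α)β^{n−1} / [(1−a)(1 + (1−α)(1−β^n)/(1−β) + (1−α)aβ^{n−1}/(1−a))]. -/

import Mathlib

theorem stmt4 (α β a : ℝ) (hα : α ∈ Set.Ioo (0 : ℝ) 1) (hβ : β ∈ Set.Ioo (0 : ℝ) 1)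
    (ha : a ∈ Set.Ioo (0 : ℝ) 1) (hab : a < β) (n : ℕ) (hn : 1 ≤ n)
    (σ : ℕ → ℝ)
    (hσ0 : σ 0 = 1 / (1 + (1 - α) * (1 - β ^ n) / (1 - β) + (1 - α) * a * β ^ (n - 1) / (1 - a)))
    (hσ1 : ∀ k, 1 ≤ k → k ≤ n → σ k = (1 - α) * β ^ (k - 1) * σ 0)
    (hσ2 : ∀ k, n + 1 ≤ k → σ k = (1 - α) * β ^ (n - 1) * a ^ (k - n) * σ 0) :
    (∑' k : ℕ, σ (n + k)) =
      (1 - α) * β ^ (n - 1) /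
        ((1 - a) * (1 + (1 - α) * (1 - β ^ n) / (1 - β) +
          (1 - α) * a * β ^ (n - 1) / (1 - a))) := by
  have hform : ∀ k : ℕ, σ (n + k) = (1 - α) * β ^ (n - 1) * σ 0 * a ^ k := by
    intro k
    cases k with
    | zero => simpa [mul_comm] using hσ1 n hn le_rfl
    | succ m =>
        have h := hσ2 (n + (m + 1)) (by omega)
        have : n + (m + 1) - n = m + 1 := by omega
        rw [h, this]; ring
  have ha1 : |a| < 1 := by
    rw [abs_lt]; constructor <;> [linarith [ha.1]; exact ha.2]
  have hsum : ∑' k : ℕ, ((1 - α) * β ^ (n - 1) * σ 0 * a ^ k)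
      = (1 - α) * β ^ (n - 1) * σ 0 * (1 - a)⁻¹ := by
    rw [tsum_mul_left, tsum_geometric_of_lt_one (by linarith [ha.1]) ha.2]
  calc (∑' k : ℕ, σ (n + k)) = ∑' k : ℕ, ((1 - α) * β ^ (n - 1) * σ 0 * a ^ k) := by
        exact tsum_congr hform
    _ = (1 - α) * β ^ (n - 1) * σ 0 * (1 - a)⁻¹ := hsum
    _ = _ := by
        rw [hσ0]
        have hane : (0 : ℝ) < 1 - a := by linarith [ha.2]
        have hbe : (0 : ℝ) < 1 - β := by linarith [hβ.2]
        have hD : (0 : ℝ) < 1 + (1 - α) * (1 - β ^ n) / (1 - β) + (1 - α) * a * β ^ (n - 1) / (1 - a) := by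
          have h1 : 0 ≤ (1 - α) * (1 - β ^ n) / (1 - β) := by
            apply div_nonneg _ hbe.le
            have : β ^ n ≤ 1 := pow_le_one₀ hβ.1.le hβ.2.le
            nlinarith [hα.2]
          have h2 : 0 ≤ (1 - α) * a * β ^ (n - 1) / (1 - a) := by
            apply div_nonneg _ hane.le
            exact mul_nonneg (mul_nonneg (by linarith [hα.2]) ha.1.le)
              (pow_nonneg hβ.1.le _)
          linarith
        field_simp [hD.ne', hane.ne']
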